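/- The language L_lin = { a^n b^n : n ≥ 1 } over the alphabet {a,b} is accepted by a repetitive nondeterministic finite automaton with translucent words (RNFAwtw). -/

import Mathlib

/-! Repetitive (non)deterministic finite automata with translucent words. -/

/-- Behavior of the automaton at the end-of-tape marker: halt accepting,
halt rejecting, or (in the repetitive case) continue in one of a set of states. -/
inductive EndBehavior (Q : Type) : Type where
  | accept : EndBehavior Q
  | reject : EndBehavior Q
  | cont : Set Q → EndBehavior Q

/-- `InStar S w` means `w` belongs to the Kleene star `S*` of the set of words `S`. -/
def InStar {α : Type} (S : Set (List α)) (w : List α) : Prop :=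
  ∃ l : List (List α), (∀ u ∈ l, u ∈ S) ∧ l.flatten = w

/-- A (repetitive) nondeterministic finite automaton with translucent words,
with state set `Q` over the alphabet `α`.  `tl q` is the set `τ(q)` of
translucent words of the state `q`, `delta` is the transition function and
`endB q` is the behavior at the end-of-tape marker.  The fields `tl_fin`,
`code_ne`, `prefix_code` and `tl_head` express that each `τ(q)` is finite,
that `τ(q) ∪ Σ_q` is a prefix code (no empty word, and no member is a proper
prefix of another member), and that no word of `τ(q)` begins with a letter
readable in `q`. -/
structure RNFAwtw (α : Type) (Q : Type) : Type where
  init : Set Q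
  tl : Q → Set (List α)
  delta : Q → α → Set Q
  endB : Q → EndBehavior Q
  tl_fin : ∀ q, (tl q).Finite
  code_ne : ∀ q, [] ∉ tl q
  prefix_code : ∀ q,
    ∀ u ∈ tl q ∪ {w | ∃ a, (delta q a).Nonempty ∧ w = [a]},
    ∀ v ∈ tl q ∪ {w | ∃ a, (delta q a).Nonempty ∧ w = [a]},
      u <+: v → u = v
  tl_head : ∀ q, ∀ t ∈ tl q, ∀ a, (delta q a).Nonempty → ¬ [a] <+: t

/-- Configurations: a pair of a state and the remaining tape content, or one
of the two halting configurations. -/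
inductive Conf (α Q : Type) : Type where
  | state : Q → List α → Conf α Q
  | accept : Conf α Q
  | reject : Conf α Q

/-- The single-step computation relation of an RNFAwtw. -/
inductive RNFAwtw.Step {α Q : Type} (A : RNFAwtw α Q) :
    Conf α Q → Conf α Q → Prop where
  | read {q q' : Q} {a : α} {u v : List α} :
      InStar (A.tl q) u → q' ∈ A.delta q a →
      RNFAwtw.Step A (Conf.state q (u ++ a :: v)) (Conf.state q' (u ++ v))
  | stuck {q : Q} {a : α} {u v : List α} :
      InStar (A.tl q) u → A.delta q a = ∅ →
      (∀ t ∈ A.tl q, ¬ t <+: (a :: v)) →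
      RNFAwtw.Step A (Conf.state q (u ++ a :: v)) Conf.reject
  | haltAccept {q : Q} {w : List α} :
      InStar (A.tl q) w → A.endB q = EndBehavior.accept →
      RNFAwtw.Step A (Conf.state q w) Conf.accept
  | haltReject {q : Q} {w : List α} :
      InStar (A.tl q) w → A.endB q = EndBehavior.reject →
      RNFAwtw.Step A (Conf.state q w) Conf.reject
  | goOn {q q' : Q} {w : List α} {S : Set Q} :
      InStar (A.tl q) w → A.endB q = EndBehavior.cont S → q' ∈ S →
      RNFAwtw.Step A (Conf.state q w) (Conf.state q' w)

/-- `A` accepts the word `w`. -/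
def RNFAwtw.Accepts {α Q : Type} (A : RNFAwtw α Q) (w : List α) : Prop :=
  ∃ q0 ∈ A.init, Relation.ReflTransGen A.Step (Conf.state q0 w) Conf.accept

/-- The language accepted by `A`. -/
def RNFAwtw.lang {α Q : Type} (A : RNFAwtw α Q) : Set (List α) :=
  { w | A.Accepts w }

/-- `A` is deterministic: one initial state, at most one transition per
state/letter pair, and at the end-of-tape marker the continuation (if any)
is a single state. -/
def RNFAwtw.Deterministic {α Q : Type} (A : RNFAwtw α Q) : Prop :=
  (∃ q0, A.init = {q0}) ∧
  (∀ q a, (A.delta q a).Subsingleton) ∧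
  (∀ q S, A.endB q = EndBehavior.cont S → ∃ q', S = {q'})

/-- `A` is non-repetitive: at the end-of-tape marker it always halts. -/
def RNFAwtw.NonRepetitive {α Q : Type} (A : RNFAwtw α Q) : Prop :=
  ∀ q S, A.endB q ≠ EndBehavior.cont S

/-- `L` is accepted by some repetitive NFAwtw (with a finite state set). -/
def AcceptedByRNFAwtw {α : Type} (L : Set (List α)) : Prop :=
  ∃ (Q : Type) (_ : Finite Q) (A : RNFAwtw α Q), A.lang = L

/-- `L` is accepted by some repetitive DFAwtw. -/
def AcceptedByRDFAwtw {α : Type} (L : Set (List α)) : Prop :=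
  ∃ (Q : Type) (_ : Finite Q) (A : RNFAwtw α Q), A.Deterministic ∧ A.lang = L

/-- `L` is accepted by some (non-repetitive) NFAwtw. -/
def AcceptedByNFAwtw {α : Type} (L : Set (List α)) : Prop :=
  ∃ (Q : Type) (_ : Finite Q) (A : RNFAwtw α Q), A.NonRepetitive ∧ A.lang = L

/-- `L` is accepted by some (non-repetitive) DFAwtw. -/
def AcceptedByDFAwtw {α : Type} (L : Set (List α)) : Prop :=
  ∃ (Q : Type) (_ : Finite Q) (A : RNFAwtw α Q),
    A.NonRepetitive ∧ A.Deterministic ∧ A.lang = L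

/-- The two-letter alphabet `{a, b}`. -/
inductive Letter : Type where
  | a : Letter
  | b : Letter
deriving DecidableEq

instance : Fintype Letter :=
  ⟨{Letter.a, Letter.b}, fun x => by cases x <;> simp⟩

/-- `L_lin = { a^n b^n : n ≥ 1 }`. -/
def Llin : Set (List Letter) :=
  { w | ∃ n : ℕ, 1 ≤ n ∧
      w = List.replicate n Letter.a ++ List.replicate n Letter.b }


/-! ### Auxiliary development for the proof -/

namespace LlinAux

abbrev La : Letter := Letter.a
abbrev Lb : Letter := Letter.b

/-- `W k m = a^k b^m`. -/
def W (k m : ℕ) : List Letter := List.replicate k La ++ List.replicate m Lb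

/-- The state set of our automaton. -/
inductive Qs : Type where
  | T0 | T1 | U1 | U2 | P | P1 | P2 | H | H2 | H3 | R3 | H4 | R4 | F
deriving DecidableEq

instance : Fintype Qs :=
  ⟨{Qs.T0, Qs.T1, Qs.U1, Qs.U2, Qs.P, Qs.P1, Qs.P2, Qs.H, Qs.H2, Qs.H3, Qs.R3, Qs.H4,
    Qs.R4, Qs.F}, fun x => by cases x <;> simp⟩

open Qs

def TA : Set (List Letter) := {[La]}
def OE : Set (List Letter) := {[La], [Lb, Lb]}
def OO : Set (List Letter) := {[La, La], [La, Lb, Lb, Lb], [Lb, Lb]}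

def tl0 : Qs → Set (List Letter)
  | U1 => OO
  | U2 => TA
  | H => TA
  | R3 => OE
  | H4 => TA
  | R4 => OO
  | _ => ∅

def d0 : Qs → Letter → Set Qs
  | T0, Letter.a => {T1}
  | T1, Letter.a => {U1}
  | U2, Letter.b => {R3}
  | P, Letter.a => {P1}
  | P1, Letter.b => {P2}
  | H, Letter.b => {H2}
  | H2, Letter.a => {H3, F}
  | H3, Letter.a => {R3}
  | H4, Letter.b => {R4, P}
  | _, _ => ∅

def e0 : Qs → EndBehavior Qs
  | P2 => .accept
  | F => .accept
  | U1 => .cont {U2}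
  | R3 => .cont {H4}
  | R4 => .cont {H}
  | _ => .reject

/-- Explicit list of code words (translucent words and readable letters) per state. -/
def CL : Qs → List (List Letter)
  | T0 => [[La]]
  | T1 => [[La]]
  | U1 => [[La, La], [La, Lb, Lb, Lb], [Lb, Lb]]
  | U2 => [[La], [Lb]]
  | P => [[La]]
  | P1 => [[Lb]]
  | P2 => []
  | H => [[La], [Lb]]
  | H2 => [[La]]
  | H3 => [[La]]
  | R3 => [[La], [Lb, Lb]]
  | H4 => [[La], [Lb]]
  | R4 => [[La, La], [La, Lb, Lb, Lb], [Lb, Lb]]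
  | F => []

lemma mem_code : ∀ (q : Qs) (w : List Letter),
    w ∈ tl0 q ∪ {w | ∃ x, (d0 q x).Nonempty ∧ w = [x]} → w ∈ CL q := by
  intro q w hw
  rcases hw with hw | ⟨x, hne, rfl⟩
  · cases q <;>
      simp only [tl0, TA, OE, OO, Set.mem_insert_iff, Set.mem_singleton_iff,
        Set.mem_empty_iff_false] at hw <;>
      first
        | exact hw.elim
        | (rcases hw with rfl | rfl | rfl <;> simp [CL])
        | (rcases hw with rfl | rfl <;> simp [CL])
        | (subst hw; simp [CL])
  · cases q <;> cases x <;>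
      first
        | exact absurd hne Set.not_nonempty_empty
        | simp [CL]

/-- The automaton. -/
def M : RNFAwtw Letter Qs where
  init := {H3, T0, P}
  tl := tl0
  delta := d0
  endB := e0
  tl_fin := by
    intro q
    cases q <;> simp only [tl0, TA, OE, OO] <;>
      first
        | exact Set.finite_empty
        | exact Set.toFinite _
  code_ne := by
    intro q
    cases q <;> simp [tl0, TA, OE, OO]
  prefix_code := by
    intro q u hu v hv hp
    have hu' := mem_code q u hu
    have hv' := mem_code q v hv
    clear hu hv
    cases q <;>
      simp only [CL, List.mem_cons, List.not_mem_nil, or_false] at hu' hv' <;>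
      first
        | exact hu'.elim
        | (rcases hu' with rfl | rfl | rfl <;> rcases hv' with rfl | rfl | rfl <;>
            revert hp <;> decide)
        | (rcases hu' with rfl | rfl <;> rcases hv' with rfl | rfl <;>
            revert hp <;> decide)
        | (subst hu'; subst hv'; revert hp; decide)
  tl_head := by
    intro q t ht x hne hp
    cases q <;>
      first
        | exact absurd ht (Set.not_mem_empty _)
        | (cases x <;>
            first
              | exact absurd hne Set.not_nonempty_empty
              | (simp only [tl0, TA, OE, OO, Set.mem_insert_iff,
                  Set.mem_singleton_iff] at ht
                 first
                   | (rcases ht with rfl | rfl | rfl <;> revert hp <;> decide)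
                   | (rcases ht with rfl | rfl <;> revert hp <;> decide)
                   | (subst ht; revert hp; decide)))

@[simp] lemma M_tl : M.tl = tl0 := rfl
@[simp] lemma M_delta : M.delta = d0 := rfl
@[simp] lemma M_endB : M.endB = e0 := rfl
@[simp] lemma M_init : M.init = {H3, T0, P} := rfl

/-! ### InStar lemmas -/

lemma instar_nil (S : Set (List Letter)) : InStar S [] := ⟨[], by simp, rfl⟩

lemma instar_empty {w : List Letter} (h : InStar (∅ : Set (List Letter)) w) : w = [] := by
  obtain ⟨l, hl, rfl⟩ := h
  cases l with
  | nil => rfl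
  | cons s t => exact absurd (hl s (by simp)) (by simp)

lemma instar_TA {u : List Letter} (h : InStar TA u) : ∃ n, u = List.replicate n La := by
  obtain ⟨l, hl, rfl⟩ := h
  induction l with
  | nil => exact ⟨0, rfl⟩
  | cons s t ih =>
    obtain ⟨n, hn⟩ := ih (fun x hx => hl x (List.mem_cons_of_mem _ hx))
    have hs : s = [La] := hl s List.mem_cons_self
    refine ⟨n + 1, ?_⟩
    simp [hs, hn, List.replicate_succ]

lemma instar_OE_inv {x : Letter} {w : List Letter} (h : InStar OE (x :: w)) :
    (x = La ∧ InStar OE w) ∨ (x = Lb ∧ ∃ w', w = Lb :: w' ∧ InStar OE w') := by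
  obtain ⟨l, hl, hf⟩ := h
  cases l with
  | nil => simp at hf
  | cons s t =>
    have hs : s ∈ OE := hl s List.mem_cons_self
    have ht : InStar OE t.flatten := ⟨t, fun y hy => hl y (List.mem_cons_of_mem _ hy), rfl⟩
    simp only [OE, Set.mem_insert_iff, Set.mem_singleton_iff] at hs
    rcases hs with rfl | rfl
    · simp only [List.flatten_cons, List.cons_append, List.nil_append] at hf
      obtain ⟨rfl, rfl⟩ := List.cons.inj hf
      exact Or.inl ⟨rfl, ht⟩
    · simp only [List.flatten_cons, List.cons_append, List.nil_append] at hf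
      obtain ⟨rfl, rfl⟩ := List.cons.inj hf
      exact Or.inr ⟨rfl, t.flatten, rfl, ht⟩

lemma instar_OO_inv {x : Letter} {w : List Letter} (h : InStar OO (x :: w)) :
    (x = La ∧ ((∃ w', w = La :: w' ∧ InStar OO w') ∨
               (∃ w', w = Lb :: Lb :: Lb :: w' ∧ InStar OO w'))) ∨
    (x = Lb ∧ ∃ w', w = Lb :: w' ∧ InStar OO w') := by
  obtain ⟨l, hl, hf⟩ := h
  cases l with
  | nil => simp at hf
  | cons s t =>
    have hs : s ∈ OO := hl s List.mem_cons_self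
    have ht : InStar OO t.flatten := ⟨t, fun y hy => hl y (List.mem_cons_of_mem _ hy), rfl⟩
    simp only [OO, Set.mem_insert_iff, Set.mem_singleton_iff] at hs
    rcases hs with rfl | rfl | rfl
    · simp only [List.flatten_cons, List.cons_append, List.nil_append] at hf
      obtain ⟨rfl, rfl⟩ := List.cons.inj hf
      exact Or.inl ⟨rfl, Or.inl ⟨t.flatten, rfl, ht⟩⟩
    · simp only [List.flatten_cons, List.cons_append, List.nil_append] at hf
      obtain ⟨rfl, rfl⟩ := List.cons.inj hf
      exact Or.inl ⟨rfl, Or.inr ⟨t.flatten, rfl, ht⟩⟩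
    · simp only [List.flatten_cons, List.cons_append, List.nil_append] at hf
      obtain ⟨rfl, rfl⟩ := List.cons.inj hf
      exact Or.inr ⟨rfl, t.flatten, rfl, ht⟩

lemma rep_cons (n : ℕ) (x : Letter) (r : List Letter) :
    List.replicate (n + 1) x ++ r = x :: (List.replicate n x ++ r) := rfl

/-- No word of the form `a^l b a^(j+1) b^m` lies in `OE*`. -/
lemma oe_no_iso : ∀ l j m : ℕ,
    ¬ InStar OE (List.replicate l La ++ Lb ::
        (List.replicate (j + 1) La ++ List.replicate m Lb)) := by
  intro l
  induction l with
  | zero =>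
    intro j m h
    simp only [List.replicate_zero, List.nil_append] at h
    rcases instar_OE_inv h with ⟨hx, -⟩ | ⟨-, w', hw', -⟩
    · exact absurd hx (by decide)
    · rw [rep_cons] at hw'
      exact absurd (List.cons.inj hw').1 (by decide)
  | succ l ih =>
    intro j m h
    rw [rep_cons] at h
    rcases instar_OE_inv h with ⟨-, h'⟩ | ⟨hx, -⟩
    · exact ih j m h'
    · exact absurd hx (by decide)

/-- No word of the form `a^l b a^(j+1) b^m` lies in `OO*`. -/
lemma oo_no_iso : ∀ l j m : ℕ,
    ¬ InStar OO (List.replicate l La ++ Lb ::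
        (List.replicate (j + 1) La ++ List.replicate m Lb)) := by
  intro l
  induction l using Nat.strong_induction_on with
  | _ l ih =>
    intro j m h
    match l with
    | 0 =>
      simp only [List.replicate_zero, List.nil_append] at h
      rcases instar_OO_inv h with ⟨hx, -⟩ | ⟨-, w', hw', -⟩
      · exact absurd hx (by decide)
      · rw [rep_cons] at hw'
        exact absurd (List.cons.inj hw').1 (by decide)
    | 1 =>
      rw [rep_cons] at h
      simp only [List.replicate_zero, List.nil_append] at h
      rcases instar_OO_inv h with ⟨-, ⟨w', hw', -⟩ | ⟨w', hw', -⟩⟩ | ⟨hx, -⟩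
      · exact absurd (List.cons.inj hw').1 (by decide)
      · obtain ⟨-, hw2⟩ := List.cons.inj hw'
        rw [rep_cons] at hw2
        exact absurd (List.cons.inj hw2).1 (by decide)
      · exact absurd hx (by decide)
    | (l' + 2) =>
      rw [rep_cons, rep_cons] at h
      rcases instar_OO_inv h with ⟨-, ⟨w', hw', hw's⟩ | ⟨w', hw', -⟩⟩ | ⟨hx, -⟩
      · obtain ⟨-, rfl⟩ := List.cons.inj hw'
        exact ih l' (by omega) j m hw's
      · exact absurd (List.cons.inj hw').1 (by decide)
      · exact absurd hx (by decide)

lemma oo_not_ab : ¬ InStar OO [La, Lb] := by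
  intro h
  rcases instar_OO_inv h with ⟨-, ⟨w', hw', -⟩ | ⟨w', hw', -⟩⟩ | ⟨hx, -⟩
  · exact absurd (List.cons.inj hw').1 (by decide)
  · exact absurd (List.cons.inj hw').2 (by simp)
  · exact absurd hx (by decide)

/-! ### Positive InStar constructions -/

lemma flatten_rep_single (n : ℕ) (x : Letter) :
    (List.replicate n [x]).flatten = List.replicate n x := by
  induction n with
  | zero => rfl
  | succ n ih => simp [List.replicate_succ, ih]

lemma flatten_rep_pair (n : ℕ) (x : Letter) :
    (List.replicate n [x, x]).flatten = List.replicate (2 * n) x := by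
  induction n with
  | zero => rfl
  | succ n ih =>
    rw [show 2 * (n + 1) = 2 * n + 1 + 1 by ring]
    simp [List.replicate_succ, ih]

lemma instar_rep_TA (n : ℕ) : InStar TA (List.replicate n La) := by
  refine ⟨List.replicate n [La], ?_, flatten_rep_single n La⟩
  intro u hu
  rw [List.eq_of_mem_replicate hu]
  rfl

lemma instar_OE_W (t : ℕ) : InStar OE (W (2 * t + 1) (2 * t + 2)) := by
  refine ⟨List.replicate (2 * t + 1) [La] ++ List.replicate (t + 1) [Lb, Lb], ?_, ?_⟩
  · intro u hu
    rcases List.mem_append.mp hu with hu | hu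
    · rw [List.eq_of_mem_replicate hu]; exact Or.inl rfl
    · rw [List.eq_of_mem_replicate hu]; exact Or.inr rfl
  · rw [List.flatten_append, flatten_rep_single, flatten_rep_pair, W,
      show 2 * (t + 1) = 2 * t + 2 by ring]

lemma instar_OO_W33 (t : ℕ) : InStar OO (W (2 * (t + 1) + 1) (2 * (t + 1) + 1)) := by
  refine ⟨List.replicate (t + 1) [La, La] ++ [[La, Lb, Lb, Lb]] ++ List.replicate t [Lb, Lb],
    ?_, ?_⟩
  · intro u hu
    rcases List.mem_append.mp hu with hu | hu
    · rcases List.mem_append.mp hu with hu | hu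
      · rw [List.eq_of_mem_replicate hu]; exact Or.inl rfl
      · rw [List.eq_of_mem_singleton hu]; exact Or.inr (Or.inl rfl)
    · rw [List.eq_of_mem_replicate hu]; exact Or.inr (Or.inr rfl)
  · rw [List.flatten_append, List.flatten_append, flatten_rep_pair, flatten_rep_pair]
    simp only [List.flatten_cons, List.flatten_nil, List.append_nil, W]
    rw [show List.replicate (2 * (t + 1) + 1) La
          = List.replicate (2 * (t + 1)) La ++ [La] from by
        rw [← List.replicate_succ']]
    rw [show List.replicate (2 * (t + 1) + 1) Lb
          = Lb :: Lb :: Lb :: List.replicate (2 * t) Lb from by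
        rw [show 2 * (t + 1) + 1 = 2 * t + 1 + 1 + 1 by ring]
        simp [List.replicate_succ]]
    simp [List.append_assoc]

lemma instar_OO_W13 (t : ℕ) : InStar OO (W (2 * t + 1) (2 * t + 3)) := by
  refine ⟨List.replicate t [La, La] ++ [[La, Lb, Lb, Lb]] ++ List.replicate t [Lb, Lb],
    ?_, ?_⟩
  · intro u hu
    rcases List.mem_append.mp hu with hu | hu
    · rcases List.mem_append.mp hu with hu | hu
      · rw [List.eq_of_mem_replicate hu]; exact Or.inl rfl
      · rw [List.eq_of_mem_singleton hu]; exact Or.inr (Or.inl rfl)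
    · rw [List.eq_of_mem_replicate hu]; exact Or.inr (Or.inr rfl)
  · rw [List.flatten_append, List.flatten_append, flatten_rep_pair, flatten_rep_pair]
    simp only [List.flatten_cons, List.flatten_nil, List.append_nil, W]
    rw [show List.replicate (2 * t + 1) La
          = List.replicate (2 * t) La ++ [La] from by
        rw [← List.replicate_succ']]
    rw [show List.replicate (2 * t + 3) Lb
          = Lb :: Lb :: Lb :: List.replicate (2 * t) Lb from by
        rw [show 2 * t + 3 = 2 * t + 1 + 1 + 1 by ring]
        simp [List.replicate_succ]]
    simp [List.append_assoc]

/-! ### Splitting lemma -/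

lemma split_rep : ∀ (l : ℕ) (K m : ℕ) (v : List Letter),
    List.replicate l La ++ v = W K m →
    l ≤ K ∧ v = List.replicate (K - l) La ++ List.replicate m Lb := by
  intro l
  induction l with
  | zero =>
    intro K m v h
    simp only [List.replicate_zero, List.nil_append] at h
    exact ⟨Nat.zero_le K, by simpa [W] using h⟩
  | succ l ih =>
    intro K m v h
    rw [rep_cons] at h
    cases K with
    | zero =>
      cases m with
      | zero => simp [W] at h
      | succ m =>
        exfalso
        have h' : La :: (List.replicate l La ++ v) = Lb :: List.replicate m Lb := h
        exact absurd (List.cons.inj h').1 (by decide)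
    | succ K =>
      rw [show W (K + 1) m = La :: W K m from rfl] at h
      obtain ⟨-, h'⟩ := List.cons.inj h
      obtain ⟨hle, hv⟩ := ih K m v h'
      exact ⟨Nat.succ_le_succ hle, by simpa [Nat.succ_sub_succ] using hv⟩

/-! ### The invariant -/

def Phi : Qs → List Letter → Prop
  | T0, w => ∃ t, w = W (2 * t + 3) (2 * t + 3)
  | T1, w => ∃ t, w = W (2 * t + 2) (2 * t + 3)
  | U1, w => ∃ t, w = W (2 * t + 1) (2 * t + 3)
  | U2, w => ∃ t l, l ≤ 2 * t + 1 ∧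
      w = List.replicate l La ++ Lb ::
        (List.replicate (2 * t + 1 - l) La ++ List.replicate (2 * t + 2) Lb)
  | P, w => w = [La, Lb]
  | P1, w => w = [Lb]
  | P2, w => w = []
  | H, w => ∃ s l, l ≤ 2 * s + 1 ∧
      w = List.replicate l La ++ Lb ::
        (List.replicate (2 * s + 1 - l) La ++ List.replicate (2 * s) Lb)
  | H2, w => ∃ s, w = W (2 * s + 1) (2 * s)
  | H3, w => ∃ s, w = W (2 * s + 2) (2 * s + 2)
  | R3, w => ∃ t, w = W (2 * t + 1) (2 * t + 2)
  | H4, w => ∃ t l, l ≤ 2 * t + 1 ∧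
      w = List.replicate l La ++ Lb ::
        (List.replicate (2 * t + 1 - l) La ++ List.replicate (2 * t + 1) Lb)
  | R4, w => ∃ t, w = W (2 * t + 3) (2 * t + 3)
  | F, w => w = []

def motive : Conf Letter Qs → Prop
  | .state q w => Phi q w
  | .accept => True
  | .reject => False

lemma sound_read : ∀ (q q' : Qs) (x : Letter) (u v : List Letter),
    InStar (M.tl q) u → q' ∈ M.delta q x → Phi q' (u ++ v) → Phi q (u ++ x :: v) := by
  intro q q' x u v hu hq' ih
  cases q <;> cases x <;> (try exact hq'.elim)
  -- T0, a
  · have hq : q' = T1 := hq'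
    subst hq
    obtain rfl := instar_empty hu
    obtain ⟨t, rfl⟩ := ih
    exact ⟨t, rfl⟩
  -- T1, a
  · have hq : q' = U1 := hq'
    subst hq
    obtain rfl := instar_empty hu
    obtain ⟨t, rfl⟩ := ih
    exact ⟨t, rfl⟩
  -- U2, b
  · have hq : q' = R3 := hq'
    subst hq
    obtain ⟨l, rfl⟩ := instar_TA hu
    obtain ⟨t, h⟩ := ih
    obtain ⟨hle, hv⟩ := split_rep l _ _ v h
    exact ⟨t, l, hle, by rw [hv]⟩
  -- P, a
  · have hq : q' = P1 := hq'
    subst hq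
    obtain rfl := instar_empty hu
    simp only [List.nil_append] at ih
    subst ih
    rfl
  -- P1, b
  · have hq : q' = P2 := hq'
    subst hq
    obtain rfl := instar_empty hu
    simp only [List.nil_append] at ih
    subst ih
    rfl
  -- H, b
  · have hq : q' = H2 := hq'
    subst hq
    obtain ⟨l, rfl⟩ := instar_TA hu
    obtain ⟨s, h⟩ := ih
    obtain ⟨hle, hv⟩ := split_rep l _ _ v h
    exact ⟨s, l, hle, by rw [hv]⟩
  -- H2, a
  · have hq : q' = H3 ∨ q' = F := hq'
    obtain rfl := instar_empty hu
    rcases hq with rfl | rfl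
    · simp only [List.nil_append] at ih
      obtain ⟨s, rfl⟩ := ih
      exact ⟨s + 1, rfl⟩
    · simp only [List.nil_append] at ih
      subst ih
      exact ⟨0, rfl⟩
  -- H3, a
  · have hq : q' = R3 := hq'
    subst hq
    obtain rfl := instar_empty hu
    obtain ⟨t, rfl⟩ := ih
    exact ⟨t, rfl⟩
  -- H4, b
  · have hq : q' = R4 ∨ q' = P := hq'
    obtain ⟨l, rfl⟩ := instar_TA hu
    rcases hq with rfl | rfl
    · obtain ⟨t, h⟩ := ih
      obtain ⟨hle, hv⟩ := split_rep l _ _ v h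
      refine ⟨t + 1, l, by omega, ?_⟩
      rw [hv, show 2 * (t + 1) + 1 = 2 * t + 3 from by ring]
    · have h : List.replicate l La ++ v = W 1 1 := ih
      obtain ⟨hle, hv⟩ := split_rep l _ _ v h
      refine ⟨0, l, by omega, ?_⟩
      rw [hv, show 2 * 0 + 1 = 1 from rfl]

lemma sound : ∀ c : Conf Letter Qs,
    Relation.ReflTransGen M.Step c Conf.accept → motive c := by
  intro c h
  induction h using Relation.ReflTransGen.head_induction_on with
  | refl => trivial
  | head h' hrest ih =>
    cases h' with
    | read hu hq' => exact sound_read _ _ _ _ _ hu hq' ih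
    | stuck hu hd hpre => exact ih.elim
    | haltReject hw he => exact ih.elim
    | @haltAccept q w hw he =>
      cases q <;> (try (simp [e0] at he; done)) <;>
        exact instar_empty hw
    | @goOn q q' w S hw he hq' =>
      cases q <;> try (simp [e0] at he; done)
      -- U1
      · injection he with hS
        subst hS
        have hq : q' = U2 := hq'
        subst hq
        obtain ⟨t, l, hle, hwv⟩ := ih
        rcases eq_or_lt_of_le hle with heq | hlt
        · subst heq
          rw [Nat.sub_self] at hwv
          simp only [List.replicate_zero, List.nil_append] at hwv
          exact ⟨t, hwv⟩
        · rw [show 2 * t + 1 - l = (2 * t - l) + 1 from by omega] at hwv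
          rw [hwv] at hw
          exact absurd hw (oo_no_iso l (2 * t - l) (2 * t + 2))
      -- R3
      · injection he with hS
        subst hS
        have hq : q' = H4 := hq'
        subst hq
        obtain ⟨t, l, hle, hwv⟩ := ih
        rcases eq_or_lt_of_le hle with heq | hlt
        · subst heq
          rw [Nat.sub_self] at hwv
          simp only [List.replicate_zero, List.nil_append] at hwv
          exact ⟨t, hwv⟩
        · rw [show 2 * t + 1 - l = (2 * t - l) + 1 from by omega] at hwv
          rw [hwv] at hw
          exact absurd hw (oe_no_iso l (2 * t - l) (2 * t + 1))
      -- R4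
      · injection he with hS
        subst hS
        have hq : q' = H := hq'
        subst hq
        obtain ⟨s, l, hle, hwv⟩ := ih
        rcases eq_or_lt_of_le hle with heq | hlt
        · subst heq
          rw [Nat.sub_self] at hwv
          simp only [List.replicate_zero, List.nil_append] at hwv
          cases s with
          | zero =>
            rw [show List.replicate (2 * 0 + 1) La ++ Lb :: List.replicate (2 * 0) Lb
                  = [La, Lb] from rfl] at hwv
            rw [hwv] at hw
            exact absurd hw oo_not_ab
          | succ s' =>
            exact ⟨s', hwv⟩
        · rw [show 2 * s + 1 - l = (2 * s - l) + 1 from by omega] at hwv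
          rw [hwv] at hw
          exact absurd hw (oo_no_iso l (2 * s - l) (2 * s))

/-! ### Accepting runs -/

lemma run_P : Relation.ReflTransGen M.Step (Conf.state P [La, Lb]) Conf.accept := by
  have s1 : M.Step (Conf.state P [La, Lb]) (Conf.state P1 [Lb]) :=
    RNFAwtw.Step.read (u := []) (v := [Lb]) (a := La) (instar_nil _) rfl
  have s2 : M.Step (Conf.state P1 [Lb]) (Conf.state P2 []) :=
    RNFAwtw.Step.read (u := []) (v := []) (a := Lb) (instar_nil _) rfl
  have s3 : M.Step (Conf.state P2 []) Conf.accept :=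
    RNFAwtw.Step.haltAccept (instar_nil _) rfl
  exact .head s1 (.head s2 (.single s3))

lemma runR3 : ∀ t : ℕ,
    Relation.ReflTransGen M.Step (Conf.state R3 (W (2 * t + 1) (2 * t + 2))) Conf.accept := by
  intro t
  induction t with
  | zero =>
    have e : W (2 * 0 + 1) (2 * 0 + 2) = [La, Lb, Lb] := rfl
    rw [e]
    have s1 : M.Step (Conf.state R3 [La, Lb, Lb]) (Conf.state H4 [La, Lb, Lb]) := by
      refine RNFAwtw.Step.goOn ?_ rfl rfl
      refine ⟨[[La], [Lb, Lb]], ?_, rfl⟩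
      intro y hy
      simp only [List.mem_cons, List.not_mem_nil, or_false] at hy
      rcases hy with rfl | rfl
      · exact Or.inl rfl
      · exact Or.inr rfl
    have s2 : M.Step (Conf.state H4 [La, Lb, Lb]) (Conf.state P [La, Lb]) :=
      RNFAwtw.Step.read (u := [La]) (v := [Lb]) (a := Lb)
        (instar_rep_TA 1) (Or.inr rfl)
    exact .head s1 (.head s2 run_P)
  | succ t ih =>
    have s1 : M.Step (Conf.state R3 (W (2 * (t + 1) + 1) (2 * (t + 1) + 2)))
        (Conf.state H4 (W (2 * (t + 1) + 1) (2 * (t + 1) + 2))) :=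
      RNFAwtw.Step.goOn (instar_OE_W (t + 1)) rfl rfl
    have s2 : M.Step (Conf.state H4 (W (2 * (t + 1) + 1) (2 * (t + 1) + 2)))
        (Conf.state R4 (W (2 * (t + 1) + 1) (2 * (t + 1) + 1))) :=
      RNFAwtw.Step.read (u := List.replicate (2 * (t + 1) + 1) La)
        (v := List.replicate (2 * (t + 1) + 1) Lb) (a := Lb)
        (instar_rep_TA _) (Or.inl rfl)
    have s3 : M.Step (Conf.state R4 (W (2 * (t + 1) + 1) (2 * (t + 1) + 1)))
        (Conf.state H (W (2 * (t + 1) + 1) (2 * (t + 1) + 1))) :=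
      RNFAwtw.Step.goOn (instar_OO_W33 t) rfl rfl
    have s4 : M.Step (Conf.state H (W (2 * (t + 1) + 1) (2 * (t + 1) + 1)))
        (Conf.state H2 (W (2 * (t + 1) + 1) (2 * (t + 1)))) :=
      RNFAwtw.Step.read (u := List.replicate (2 * (t + 1) + 1) La)
        (v := List.replicate (2 * (t + 1)) Lb) (a := Lb)
        (instar_rep_TA _) rfl
    have s5 : M.Step (Conf.state H2 (W (2 * (t + 1) + 1) (2 * (t + 1))))
        (Conf.state H3 (W (2 * (t + 1)) (2 * (t + 1)))) :=
      RNFAwtw.Step.read (u := []) (v := W (2 * (t + 1)) (2 * (t + 1))) (a := La)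
        (instar_nil _) (Or.inl rfl)
    have s6 : M.Step (Conf.state H3 (W (2 * (t + 1)) (2 * (t + 1))))
        (Conf.state R3 (W (2 * t + 1) (2 * t + 2))) :=
      RNFAwtw.Step.read (u := []) (v := W (2 * t + 1) (2 * t + 2)) (a := La)
        (instar_nil _) rfl
    exact .head s1 (.head s2 (.head s3 (.head s4 (.head s5 (.head s6 ih)))))

lemma run_even (s : ℕ) :
    Relation.ReflTransGen M.Step (Conf.state H3 (W (2 * s + 2) (2 * s + 2))) Conf.accept := by
  have s1 : M.Step (Conf.state H3 (W (2 * s + 2) (2 * s + 2)))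
      (Conf.state R3 (W (2 * s + 1) (2 * s + 2))) :=
    RNFAwtw.Step.read (u := []) (v := W (2 * s + 1) (2 * s + 2)) (a := La)
      (instar_nil _) rfl
  exact .head s1 (runR3 s)

lemma run_odd (t : ℕ) :
    Relation.ReflTransGen M.Step (Conf.state T0 (W (2 * t + 3) (2 * t + 3))) Conf.accept := by
  have s1 : M.Step (Conf.state T0 (W (2 * t + 3) (2 * t + 3)))
      (Conf.state T1 (W (2 * t + 2) (2 * t + 3))) :=
    RNFAwtw.Step.read (u := []) (v := W (2 * t + 2) (2 * t + 3)) (a := La)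
      (instar_nil _) rfl
  have s2 : M.Step (Conf.state T1 (W (2 * t + 2) (2 * t + 3)))
      (Conf.state U1 (W (2 * t + 1) (2 * t + 3))) :=
    RNFAwtw.Step.read (u := []) (v := W (2 * t + 1) (2 * t + 3)) (a := La)
      (instar_nil _) rfl
  have s3 : M.Step (Conf.state U1 (W (2 * t + 1) (2 * t + 3)))
      (Conf.state U2 (W (2 * t + 1) (2 * t + 3))) :=
    RNFAwtw.Step.goOn (instar_OO_W13 t) rfl rfl
  have s4 : M.Step (Conf.state U2 (W (2 * t + 1) (2 * t + 3)))
      (Conf.state R3 (W (2 * t + 1) (2 * t + 2))) :=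
    RNFAwtw.Step.read (u := List.replicate (2 * t + 1) La)
      (v := List.replicate (2 * t + 2) Lb) (a := Lb)
      (instar_rep_TA _) rfl
  exact .head s1 (.head s2 (.head s3 (.head s4 (runR3 t))))

lemma M_lang : M.lang = Llin := by
  ext w
  constructor
  · rintro ⟨q0, hq0, hrun⟩
    have hmem : q0 = H3 ∨ q0 = T0 ∨ q0 = P := hq0
    have h : Phi q0 w := sound _ hrun
    rcases hmem with rfl | rfl | rfl
    · obtain ⟨s, rfl⟩ := h
      exact ⟨2 * s + 2, by omega, rfl⟩
    · obtain ⟨t, rfl⟩ := h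
      exact ⟨2 * t + 3, by omega, rfl⟩
    · rw [h]
      exact ⟨1, le_refl 1, rfl⟩
  · rintro ⟨n, hn, rfl⟩
    have hcase : n = 1 ∨ (∃ s, n = 2 * s + 2) ∨ (∃ t, n = 2 * t + 3) := by
      rcases Nat.even_or_odd n with ⟨k, hk⟩ | ⟨k, hk⟩
      · exact Or.inr (Or.inl ⟨k - 1, by omega⟩)
      · rcases Nat.eq_zero_or_pos k with rfl | hkpos
        · exact Or.inl (by omega)
        · exact Or.inr (Or.inr ⟨k - 1, by omega⟩)
    rcases hcase with rfl | ⟨s, rfl⟩ | ⟨t, rfl⟩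
    · exact ⟨P, Or.inr (Or.inr rfl), run_P⟩
    · exact ⟨H3, Or.inl rfl, run_even s⟩
    · exact ⟨T0, Or.inr (Or.inl rfl), run_odd t⟩

end LlinAux

/-- The language `L_lin = { a^n b^n : n ≥ 1 }` is accepted by a repetitive
nondeterministic finite automaton with translucent words. -/
theorem Llin_accepted_by_RNFAwtw : AcceptedByRNFAwtw Llin := by
  exact ⟨LlinAux.Qs, Finite.of_fintype _, LlinAux.M, LlinAux.M_lang⟩
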